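/- Let f ∈ ℝ[t,x,y] be homogeneous of degree m and suppose (0,0,1) is a zero of f of multiplicity d ≥ 1; write f(t,x,y) = Σ_{j=d}^{m} y^{m−j}·h_j(t,x) where each h_j ∈ ℝ[t,x] is homogeneous of degree j and h_d ≠ 0. Then: (a) for c ∈ ℝ, r^{d+1} divides the binary form f(r·(−c,1,0) + s·(0,0,1)) ∈ ℝ[r,s] if and only if h_d(−c,1) = 0, which holds if and only if (t + cx) divides h_d in ℝ[t,x]; (b) if moreover λ : ℝ → ℝ is a function with f(−λ(x), x, 1) = 0 for all x ∈ ℝ, and lim_{x→0⁺} λ(x)/x = c or lim_{x→0⁻} λ(x)/x = c, then h_d(−c,1) = 0. -/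

import Mathlib

noncomputable section

open MvPolynomial in
/-- The binary form `f(r·q + s·p) ∈ ℝ[r,s]` obtained by restricting `f ∈ ℝ[t,x,y]`
to the line spanned by `q` and `p` (variable `X 0 = r`, `X 1 = s`). -/
def substLine (f : MvPolynomial (Fin 3) ℝ) (q p : Fin 3 → ℝ) : MvPolynomial (Fin 2) ℝ :=
  aeval (fun i => C (q i) * X 0 + C (p i) * X 1) f

section Aux
open MvPolynomial Filter

lemma aeval_homog_line {n j : ℕ} {S : Type*} [CommRing S] [Algebra ℝ S]
    {h : MvPolynomial (Fin n) ℝ} (hh : h.IsHomogeneous j) (v : Fin n → ℝ) (Y : S) :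
    aeval (fun i => algebraMap ℝ S (v i) * Y) h = algebraMap ℝ S (eval v h) * Y ^ j := by
  rw [aeval_def, eval₂_eq', eval_eq', map_sum, Finset.sum_mul]
  apply Finset.sum_congr rfl
  intro dd hd
  have hdeg : ∑ i, dd i = j := by
    have h2 := hh (mem_support_iff.mp hd)
    simp only [Finsupp.weight_apply, Pi.one_apply, smul_eq_mul, mul_one] at h2
    rw [← h2, Finsupp.sum]
    exact (Finset.sum_subset (Finset.subset_univ _) (fun i _ hi => by
      simpa using Finsupp.notMem_support_iff.mp hi)).symm
  simp only [mul_pow, Finset.prod_mul_distrib, Finset.prod_pow_eq_pow_sum, hdeg, map_mul,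
    map_prod, map_pow]
  ring

lemma substLine_sum (m d : ℕ) (h : ℕ → MvPolynomial (Fin 2) ℝ)
    (hhom : ∀ j ∈ Finset.Icc d m, (h j).IsHomogeneous j) (c : ℝ) :
    substLine (∑ j ∈ Finset.Icc d m,
        (X 2 : MvPolynomial (Fin 3) ℝ) ^ (m - j) * rename Fin.castSucc (h j)) ![-c,1,0] ![0,0,1]
      = ∑ j ∈ Finset.Icc d m, C (eval ![-c,1] (h j)) * X 0 ^ j * X 1 ^ (m - j) := by
  rw [substLine, map_sum]
  apply Finset.sum_congr rfl
  intro j hj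
  rw [map_mul, map_pow, aeval_X, aeval_rename]
  have hfun : ((fun i => C (![-c,1,0] i) * X 0 + C (![0,0,1] i) * X 1) ∘ Fin.castSucc :
      Fin 2 → MvPolynomial (Fin 2) ℝ) = fun i => algebraMap ℝ _ ((![-c,1] : Fin 2 → ℝ) i) * X 0 := by
    funext i
    fin_cases i <;> simp [algebraMap_eq]
  rw [hfun, aeval_homog_line (hhom j hj)]
  simp [algebraMap_eq]
  ring

lemma dvd_sum_iff (m d : ℕ) (hdm : d ≤ m) (e : ℕ → ℝ) :
    ((X 0 : MvPolynomial (Fin 2) ℝ) ^ (d + 1) ∣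
      ∑ j ∈ Finset.Icc d m, C (e j) * X 0 ^ j * X 1 ^ (m - j)) ↔ e d = 0 := by
  constructor
  · intro hdvd
    have hφ := map_dvd (aeval ![Polynomial.X, (1 : Polynomial ℝ)]) hdvd
    rw [map_pow, aeval_X, map_sum] at hφ
    simp only [map_mul, map_pow, aeval_X, aeval_C, Matrix.cons_val_zero, Matrix.cons_val_one,
      Matrix.head_cons, one_pow, mul_one, algebraMap_eq] at hφ
    rw [Polynomial.X_pow_dvd_iff] at hφ
    have := hφ d (by omega)
    simp only [Polynomial.algebraMap_eq, Polynomial.finset_sum_coeff, Polynomial.coeff_C_mul, Polynomial.coeff_X_pow,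
      mul_ite, mul_one, mul_zero, Finset.sum_ite_eq (Finset.Icc d m) d] at this
    rwa [if_pos (Finset.mem_Icc.mpr ⟨le_refl d, hdm⟩)] at this
  · intro h0
    apply Finset.dvd_sum
    intro j hj
    rcases eq_or_ne j d with rfl | hne
    · rw [h0]; simp
    · have : d + 1 ≤ j := by
        rcases Finset.mem_Icc.mp hj with ⟨h1, _⟩; omega
      exact ((pow_dvd_pow (X 0) this).mul_left (C (e j))).mul_right _

lemma root_iff_dvd {j : ℕ} {h : MvPolynomial (Fin 2) ℝ} (hh : h.IsHomogeneous j) (c : ℝ) :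
    eval ![-c, 1] h = 0 ↔ (X 0 + C c * X 1 : MvPolynomial (Fin 2) ℝ) ∣ h := by
  constructor
  · intro h0
    set E := finSuccEquiv ℝ 1 with hE
    set a : MvPolynomial (Fin 1) ℝ := C (-c) * X 0 with ha
    have hone : (X 1 : MvPolynomial (Fin 2) ℝ) = X (Fin.succ 0) := by
      congr 1
    have hC : ∀ r : ℝ, E (C r) = Polynomial.C (C r) := by
      intro r; simp [hE, finSuccEquiv_apply]
    have hcomp : ∀ p : MvPolynomial (Fin 2) ℝ,
        Polynomial.eval a (E p) = aeval ![a, X 0] p := by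
      intro p
      induction p using MvPolynomial.induction_on with
      | C r => simp [hC r, algebraMap_eq]
      | add p q hp hq => simp [map_add, hp, hq]
      | mul_X p i hp =>
        rw [map_mul, map_mul, Polynomial.eval_mul, hp]
        congr 1
        rcases Fin.eq_zero_or_eq_succ i with rfl | ⟨k, rfl⟩
        · rw [hE, finSuccEquiv_X_zero]; simp
        · rw [hE, finSuccEquiv_X_succ]
          have : k = 0 := Subsingleton.elim _ _
          subst this
          simp
    have hfun : (![a, X 0] : Fin 2 → MvPolynomial (Fin 1) ℝ)
        = fun i => algebraMap ℝ _ ((![-c,1] : Fin 2 → ℝ) i) * X 0 := by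
      funext i; fin_cases i <;> simp [ha, algebraMap_eq]
    have key : Polynomial.eval a (E h) = 0 := by
      rw [hcomp, hfun, aeval_homog_line hh, h0, map_zero, zero_mul]
    have hlin : E (X 0 + C c * X 1) = Polynomial.X - Polynomial.C a := by
      rw [map_add, map_mul, hC, hE, finSuccEquiv_X_zero, hone, finSuccEquiv_X_succ,
        ← Polynomial.C_mul, ha, map_neg, neg_mul, Polynomial.C_neg, sub_neg_eq_add]
    have hdvd : E (X 0 + C c * X 1) ∣ E h := by
      rw [hlin]
      exact (Polynomial.dvd_iff_isRoot).mpr key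
    obtain ⟨u, hu⟩ := hdvd
    refine ⟨E.symm u, E.injective ?_⟩
    rw [map_mul, hu, AlgEquiv.apply_symm_apply]
  · rintro ⟨u, rfl⟩
    simp

lemma eval_homog_scale {n j : ℕ} {h : MvPolynomial (Fin n) ℝ} (hh : h.IsHomogeneous j)
    (v : Fin n → ℝ) (t : ℝ) :
    eval (fun i => v i * t) h = eval v h * t ^ j := by
  have := aeval_homog_line (S := ℝ) hh v t
  simpa [aeval_def, Algebra.algebraMap_self, eval₂_id] using this

open Filter in
lemma part_b_aux (m d : ℕ) (hdm : d ≤ m) (h : ℕ → MvPolynomial (Fin 2) ℝ)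
    (hhom : ∀ j ∈ Finset.Icc d m, (h j).IsHomogeneous j)
    (lam : ℝ → ℝ) (c : ℝ) (l : Filter ℝ) [l.NeBot] (hl : l ≤ nhds 0)
    (hne : ∀ᶠ x in l, x ≠ 0)
    (hz : ∀ x : ℝ, x ≠ 0 → ∑ j ∈ Finset.Icc d m, eval ![-(lam x), x] (h j) = 0)
    (htend : Tendsto (fun x => lam x / x) l (nhds c)) :
    eval ![-c, 1] (h d) = 0 := by
  set G : ℝ → ℝ := fun x => ∑ j ∈ Finset.Icc d m, eval ![-(lam x / x), 1] (h j) * x ^ (j - d)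
    with hG
  have hG0 : ∀ᶠ x in l, G x = 0 := by
    filter_upwards [hne] with x hx
    have key : ∀ j ∈ Finset.Icc d m, eval ![-(lam x), x] (h j)
        = eval ![-(lam x / x), 1] (h j) * x ^ j := by
      intro j hj
      have hv : (![-(lam x), x] : Fin 2 → ℝ)
          = fun i => (![-(lam x / x), 1] : Fin 2 → ℝ) i * x := by
        funext i; fin_cases i
        · simp [div_mul_cancel₀, hx]
        · simp
      rw [hv, eval_homog_scale (hhom j hj)]
    have hsum : x ^ d * G x = ∑ j ∈ Finset.Icc d m, eval ![-(lam x), x] (h j) := by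
      rw [hG, Finset.mul_sum]
      apply Finset.sum_congr rfl
      intro j hj
      have hxp : (x : ℝ) ^ d * x ^ (j - d) = x ^ j := by
        rw [← pow_add]; congr 1
        have := (Finset.mem_Icc.mp hj).1; omega
      calc x ^ d * (eval ![-(lam x / x), 1] (h j) * x ^ (j - d))
          = eval ![-(lam x / x), 1] (h j) * (x ^ d * x ^ (j - d)) := by ring
        _ = _ := by rw [hxp, ← key j hj]
    have := hsum.trans (hz x hx)
    exact (mul_eq_zero.mp this).resolve_left (pow_ne_zero d hx)
  have hcont : ∀ p : MvPolynomial (Fin 2) ℝ, Continuous fun u : ℝ => eval ![-u, 1] p := by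
    intro p
    apply (MvPolynomial.continuous_eval p).comp
    apply continuous_pi
    intro i
    fin_cases i
    · simpa using continuous_neg
    · simpa using continuous_const
  have hGlim : Tendsto G l
      (nhds (∑ j ∈ Finset.Icc d m, eval ![-c, 1] (h j) * (0 : ℝ) ^ (j - d))) := by
    apply tendsto_finset_sum
    intro j hj
    exact (((hcont (h j)).tendsto c).comp htend).mul
      (((continuous_pow (j - d)).tendsto 0).comp (tendsto_id'.mpr hl))
  have h0lim : Tendsto G l (nhds 0) :=
    Tendsto.congr' (hG0.mono fun x hx => hx.symm) tendsto_const_nhds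
  have heq := tendsto_nhds_unique h0lim hGlim
  rw [Finset.sum_eq_single d] at heq
  · simpa using heq.symm
  · intro j hj hne'
    have hlt : 0 < j - d := by
      have := (Finset.mem_Icc.mp hj).1; omega
    simp [zero_pow hlt.ne']
  · intro hd'
    exact absurd (Finset.mem_Icc.mpr ⟨le_rfl, hdm⟩) hd'

end Aux

open MvPolynomial Filter in
/-- Let `f ∈ ℝ[t,x,y]` be homogeneous of degree `m` with a zero of
multiplicity `d ≥ 1` at `(0,0,1)`, and write `f = Σ_{j=d}^m y^{m−j} h_j(t,x)` with
`h_j` homogeneous of degree `j` and `h_d ≠ 0`. Then (a) `r^{d+1} ∣ f(r(−c,1,0)+s(0,0,1))`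
iff `h_d(−c,1) = 0` iff `(t + cx) ∣ h_d`; and (b) if `λ : ℝ → ℝ` satisfies
`f(−λ(x), x, 1) = 0` for all `x` and `λ(x)/x → c` as `x → 0⁺` or `x → 0⁻`, then
`h_d(−c,1) = 0`. -/
theorem stmt15 (m d : ℕ) (hd1 : 1 ≤ d) (hdm : d ≤ m)
    (f : MvPolynomial (Fin 3) ℝ) (hm : f.IsHomogeneous m)
    (hmult : ∀ q : Fin 3 → ℝ,
      (X 0 : MvPolynomial (Fin 2) ℝ) ^ d ∣ substLine f q ![0, 0, 1])
    (hmax : ∀ e : ℕ,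
      (∀ q : Fin 3 → ℝ, (X 0 : MvPolynomial (Fin 2) ℝ) ^ e ∣ substLine f q ![0, 0, 1]) →
      e ≤ d)
    (h : ℕ → MvPolynomial (Fin 2) ℝ)
    (hhom : ∀ j ∈ Finset.Icc d m, (h j).IsHomogeneous j)
    (hhd : h d ≠ 0)
    (hdecomp : f = ∑ j ∈ Finset.Icc d m,
      (X 2 : MvPolynomial (Fin 3) ℝ) ^ (m - j) * rename Fin.castSucc (h j)) :
    (∀ c : ℝ,
      (((X 0 : MvPolynomial (Fin 2) ℝ) ^ (d + 1) ∣ substLine f ![-c, 1, 0] ![0, 0, 1]) ↔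
        eval ![-c, 1] (h d) = 0) ∧
      (eval ![-c, 1] (h d) = 0 ↔
        (X 0 + C c * X 1 : MvPolynomial (Fin 2) ℝ) ∣ h d)) ∧
    (∀ (lam : ℝ → ℝ) (c : ℝ),
      (∀ x : ℝ, eval ![-(lam x), x, 1] f = 0) →
      (Tendsto (fun x => lam x / x) (nhdsWithin 0 (Set.Ioi 0)) (nhds c) ∨
       Tendsto (fun x => lam x / x) (nhdsWithin 0 (Set.Iio 0)) (nhds c)) →
      eval ![-c, 1] (h d) = 0) := by
  have hd_mem : d ∈ Finset.Icc d m := Finset.mem_Icc.mpr ⟨le_rfl, hdm⟩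
  constructor
  · intro c
    constructor
    · rw [hdecomp, substLine_sum m d h hhom c]
      exact dvd_sum_iff m d hdm (fun j => eval ![-c, 1] (h j))
    · exact root_iff_dvd (hhom d hd_mem) c
  · intro lam c hlam htend
    have hfe : ∀ x : ℝ, ∑ j ∈ Finset.Icc d m, eval ![-(lam x), x] (h j) = 0 := by
      intro x
      have heval : eval ![-(lam x), x, 1] f
          = ∑ j ∈ Finset.Icc d m, eval ![-(lam x), x] (h j) := by
        rw [hdecomp, map_sum]
        apply Finset.sum_congr rfl
        intro j hj
        rw [eval_mul, eval_pow, eval_X, eval_rename]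
        have hco : (![-(lam x), x, 1] ∘ Fin.castSucc : Fin 2 → ℝ) = ![-(lam x), x] := by
          funext i; fin_cases i <;> rfl
        rw [hco]
        norm_num [show (![-(lam x), x, 1] : Fin 3 → ℝ) 2 = 1 from rfl]
      rw [← heval, hlam x]
    rcases htend with ht | ht
    · exact part_b_aux m d hdm h hhom lam c (nhdsWithin (0:ℝ) (Set.Ioi 0))
        nhdsWithin_le_nhds
        (eventually_mem_nhdsWithin.mono fun x hx => ne_of_gt hx) (fun x _ => hfe x) ht
    · exact part_b_aux m d hdm h hhom lam c (nhdsWithin (0:ℝ) (Set.Iio 0))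
        nhdsWithin_le_nhds
        (eventually_mem_nhdsWithin.mono fun x hx => ne_of_lt hx) (fun x _ => hfe x) ht


end
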